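/- For every ξ ∈ ℝⁿ, ε > 0, all indices i, k ∈ {1,…,n}, and every x ∈ ℝⁿ, writing u = u_{(ξ,ε)}: ∂_i u(x) ∂_k u(x) − ((n−2)/(4(n−1))) ∂_i ∂_k (u²)(x) = (1/n) ( |∇u(x)|² − ((n−2)/(4(n−1))) Δ(u²)(x) ) δ_{ik}, where δ_{ik} is the Kronecker delta and Δ is the Euclidean Laplacian. -/

import Mathlib

open scoped BigOperators

/-- The standard bubble `u_{(ξ,ε)}(x) = (ε/(ε² + |x−ξ|²))^{(n−2)/2}`. -/
noncomputable def bubble (n : ℕ) (ξ : EuclideanSpace ℝ (Fin n)) (ε : ℝ)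
    (x : EuclideanSpace ℝ (Fin n)) : ℝ :=
  (ε / (ε ^ 2 + ‖x - ξ‖ ^ 2)) ^ (((n : ℝ) - 2) / 2)

/-- Partial derivative in the `i`-th coordinate direction. -/
noncomputable def pder (n : ℕ) (i : Fin n) (f : EuclideanSpace ℝ (Fin n) → ℝ)
    (x : EuclideanSpace ℝ (Fin n)) : ℝ :=
  fderiv ℝ f x (EuclideanSpace.single i 1)

section Aux

variable {n : ℕ}

lemma hasFDerivAt_qc (ξ : EuclideanSpace ℝ (Fin n)) {ε : ℝ} (hε : ε ≠ 0) (c : ℝ)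
    (x : EuclideanSpace ℝ (Fin n)) :
    HasFDerivAt (fun y : EuclideanSpace ℝ (Fin n) => (ε ^ 2 + ‖y - ξ‖ ^ 2) ^ c)
      ((c * (ε ^ 2 + ‖x - ξ‖ ^ 2) ^ (c - 1)) • (2 • (innerSL ℝ (x - ξ)))) x := by
  have h1 : HasFDerivAt (fun y : EuclideanSpace ℝ (Fin n) => y - ξ)
      (ContinuousLinearMap.id ℝ _) x := (hasFDerivAt_id x).sub_const ξ
  have h2 := h1.norm_sq
  have h3 : HasFDerivAt (fun y : EuclideanSpace ℝ (Fin n) => ε ^ 2 + ‖y - ξ‖ ^ 2)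
      (2 • (innerSL ℝ (x - ξ))) x := by
    simpa using h2.const_add (ε ^ 2)
  have hne : (ε ^ 2 + ‖x - ξ‖ ^ 2) ≠ 0 := by positivity
  exact h3.rpow_const (Or.inl hne)

lemma smul2_innerSL_single (v : EuclideanSpace ℝ (Fin n)) (a : ℝ) (i : Fin n) :
    ((a • (2 • (innerSL ℝ v))) (EuclideanSpace.single i 1)) = a * (2 * v i) := by
  simp [real_inner_comm, EuclideanSpace.inner_single_left, EuclideanSpace.inner_single_right]

lemma pder_const_mul_qc (ξ : EuclideanSpace ℝ (Fin n)) {ε : ℝ} (hε : ε ≠ 0) (a c : ℝ)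
    (i : Fin n) (x : EuclideanSpace ℝ (Fin n)) :
    pder n i (fun y => a * (ε ^ 2 + ‖y - ξ‖ ^ 2) ^ c) x
      = a * (c * (ε ^ 2 + ‖x - ξ‖ ^ 2) ^ (c - 1)) * (2 * (x i - ξ i)) := by
  have h := (hasFDerivAt_qc ξ hε c x).const_mul a
  rw [pder, h.fderiv]
  rw [smul_smul, smul2_innerSL_single, show (x - ξ) i = x i - ξ i from rfl]

lemma pder_qc_mul_coord (ξ : EuclideanSpace ℝ (Fin n)) {ε : ℝ} (hε : ε ≠ 0) (A c : ℝ)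
    (k i : Fin n) (x : EuclideanSpace ℝ (Fin n)) :
    pder n i (fun y => A * ((ε ^ 2 + ‖y - ξ‖ ^ 2) ^ c * (y k - ξ k))) x
      = A * ((c * (ε ^ 2 + ‖x - ξ‖ ^ 2) ^ (c - 1) * (2 * (x i - ξ i))) * (x k - ξ k)
          + (ε ^ 2 + ‖x - ξ‖ ^ 2) ^ c * (if i = k then 1 else 0)) := by
  have hcoord : HasFDerivAt (fun y : EuclideanSpace ℝ (Fin n) => y k - ξ k)
      ((EuclideanSpace.proj k : EuclideanSpace ℝ (Fin n) →L[ℝ] ℝ)) x := by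
    have : HasFDerivAt (fun y : EuclideanSpace ℝ (Fin n) => y k)
        ((EuclideanSpace.proj k : EuclideanSpace ℝ (Fin n) →L[ℝ] ℝ)) x :=
      (EuclideanSpace.proj k : EuclideanSpace ℝ (Fin n) →L[ℝ] ℝ).hasFDerivAt
    simpa using this.sub_const (ξ k)
  have h := (((hasFDerivAt_qc ξ hε c x).mul hcoord).const_mul A)
  rw [pder, (show HasFDerivAt (fun y : EuclideanSpace ℝ (Fin n) => A * ((ε ^ 2 + ‖y - ξ‖ ^ 2) ^ c * (y k - ξ k))) _ x from h).fderiv]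
  have hv : (x - ξ) i = x i - ξ i := rfl
  rcases eq_or_ne i k with hik | hik
  · subst hik
    rw [if_pos rfl]
    simp [PiLp.proj_apply, EuclideanSpace.single_apply, real_inner_comm,
      EuclideanSpace.inner_single_left, EuclideanSpace.inner_single_right, hv]
    ring
  · simp only [if_neg hik]
    simp [PiLp.proj_apply, EuclideanSpace.single_apply, real_inner_comm,
      EuclideanSpace.inner_single_left, EuclideanSpace.inner_single_right, hv, if_neg (Ne.symm hik)]
    exact Or.inl (by ring)

lemma bubble_eq (ξ : EuclideanSpace ℝ (Fin n)) {ε : ℝ} (hε : 0 < ε) :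
    bubble n ξ ε = fun y => ε ^ (((n : ℝ) - 2) / 2)
      * (ε ^ 2 + ‖y - ξ‖ ^ 2) ^ (-(((n : ℝ) - 2) / 2)) := by
  funext y
  have ht : (0:ℝ) < ε ^ 2 + ‖y - ξ‖ ^ 2 := by positivity
  rw [bubble, Real.div_rpow hε.le ht.le, Real.rpow_neg ht.le, div_eq_mul_inv]

lemma bubble_sq_eq (ξ : EuclideanSpace ℝ (Fin n)) {ε : ℝ} (hε : 0 < ε) :
    (fun y => bubble n ξ ε y ^ 2) = fun y => (ε ^ (((n : ℝ) - 2) / 2)) ^ 2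
      * (ε ^ 2 + ‖y - ξ‖ ^ 2) ^ (-((n : ℝ) - 2)) := by
  funext y
  have ht : (0:ℝ) < ε ^ 2 + ‖y - ξ‖ ^ 2 := by positivity
  rw [bubble_eq ξ hε, mul_pow]
  congr 1
  rw [← Real.rpow_natCast ((ε ^ 2 + ‖y - ξ‖ ^ 2) ^ (-(((n : ℝ) - 2) / 2))) 2,
    ← Real.rpow_mul ht.le]
  congr 1
  push_cast; ring

lemma pder_bubble_sq (ξ : EuclideanSpace ℝ (Fin n)) {ε : ℝ} (hε : 0 < ε) (m : Fin n) :
    pder n m (fun y => bubble n ξ ε y ^ 2)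
      = fun y => ((ε ^ (((n : ℝ) - 2) / 2)) ^ 2 * (-((n : ℝ) - 2)) * 2)
          * ((ε ^ 2 + ‖y - ξ‖ ^ 2) ^ (-((n : ℝ) - 2) - 1) * (y m - ξ m)) := by
  funext y
  rw [bubble_sq_eq ξ hε, pder_const_mul_qc ξ hε.ne']
  ring

lemma norm_sq_eq_sum' (ξ x : EuclideanSpace ℝ (Fin n)) :
    ‖x - ξ‖ ^ 2 = ∑ l, (x l - ξ l) ^ 2 := by
  rw [← real_inner_self_eq_norm_sq, PiLp.inner_apply]
  congr 1
  funext l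
  simp [sq]

end Aux

theorem stmt_3 (n : ℕ) (hn : 3 ≤ n) (ξ : EuclideanSpace ℝ (Fin n)) (ε : ℝ) (hε : 0 < ε)
    (i k : Fin n) (x : EuclideanSpace ℝ (Fin n)) :
    pder n i (bubble n ξ ε) x * pder n k (bubble n ξ ε) x
      - ((n : ℝ) - 2) / (4 * ((n : ℝ) - 1)) *
          pder n i (pder n k (fun y => bubble n ξ ε y ^ 2)) x
    = (1 / (n : ℝ)) *
        ((∑ l, (pder n l (bubble n ξ ε) x) ^ 2)
          - ((n : ℝ) - 2) / (4 * ((n : ℝ) - 1)) *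
              (∑ l, pder n l (pder n l (fun y => bubble n ξ ε y ^ 2)) x)) *
        (if i = k then 1 else 0) := by
  have ht : (0:ℝ) < ε ^ 2 + ‖x - ξ‖ ^ 2 := by positivity
  have hn0 : (n : ℝ) ≠ 0 := Nat.cast_ne_zero.2 (by omega)
  have hn3 : (3:ℝ) ≤ (n:ℝ) := by exact_mod_cast hn
  have hn1 : (n : ℝ) - 1 ≠ 0 := by linarith
  have e1 : (ε ^ 2 + ‖x - ξ‖ ^ 2) ^ (-((n : ℝ) - 2) - 1 - 1) = (ε ^ 2 + ‖x - ξ‖ ^ 2) ^ (-(((n : ℝ) - 2) / 2) - 1) * (ε ^ 2 + ‖x - ξ‖ ^ 2) ^ (-(((n : ℝ) - 2) / 2) - 1) := by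
    rw [show -((n : ℝ) - 2) - 1 - 1 = (-(((n : ℝ) - 2) / 2) - 1) + (-(((n : ℝ) - 2) / 2) - 1) by ring, Real.rpow_add ht]
  have e2 : (ε ^ 2 + ‖x - ξ‖ ^ 2) ^ (-((n : ℝ) - 2) - 1) = (ε ^ 2 + ‖x - ξ‖ ^ 2) ^ (-(((n : ℝ) - 2) / 2) - 1) * ((ε ^ 2 + ‖x - ξ‖ ^ 2) ^ (-(((n : ℝ) - 2) / 2) - 1) * (ε ^ 2 + ‖x - ξ‖ ^ 2)) := by
    rw [show -((n : ℝ) - 2) - 1 = (-(((n : ℝ) - 2) / 2) - 1) + ((-(((n : ℝ) - 2) / 2) - 1) + 1) by ring,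
      Real.rpow_add ht, Real.rpow_add ht, Real.rpow_one]
  have hD1 : ∀ j, pder n j (bubble n ξ ε) x
      = ε ^ (((n : ℝ) - 2) / 2) * (-(((n : ℝ) - 2) / 2) * (ε ^ 2 + ‖x - ξ‖ ^ 2) ^ (-(((n : ℝ) - 2) / 2) - 1)) * (2 * (x j - ξ j)) := by
    intro j
    rw [bubble_eq ξ hε]
    exact pder_const_mul_qc ξ hε.ne' _ _ j x
  have hD2 : ∀ j m, pder n j (pder n m (fun y => bubble n ξ ε y ^ 2)) x
      = ((ε ^ (((n : ℝ) - 2) / 2)) ^ 2 * (-((n : ℝ) - 2)) * 2) * (((-((n : ℝ) - 2) - 1) * ((ε ^ 2 + ‖x - ξ‖ ^ 2) ^ (-(((n : ℝ) - 2) / 2) - 1) * (ε ^ 2 + ‖x - ξ‖ ^ 2) ^ (-(((n : ℝ) - 2) / 2) - 1)) * (2 * (x j - ξ j))) * (x m - ξ m)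
          + ((ε ^ 2 + ‖x - ξ‖ ^ 2) ^ (-(((n : ℝ) - 2) / 2) - 1) * ((ε ^ 2 + ‖x - ξ‖ ^ 2) ^ (-(((n : ℝ) - 2) / 2) - 1) * (ε ^ 2 + ‖x - ξ‖ ^ 2))) * (if j = m then 1 else 0)) := by
    intro j m
    rw [pder_bubble_sq ξ hε m, pder_qc_mul_coord ξ hε.ne', e1, e2]
  have hS : ∑ l, (x l - ξ l) ^ 2 = (ε ^ 2 + ‖x - ξ‖ ^ 2) - ε ^ 2 := by
    rw [← norm_sq_eq_sum' ξ x]; ring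
  have hsum1 : ∑ l, (pder n l (bubble n ξ ε) x) ^ 2
      = (ε ^ (((n : ℝ) - 2) / 2) * (-(((n : ℝ) - 2) / 2) * (ε ^ 2 + ‖x - ξ‖ ^ 2) ^ (-(((n : ℝ) - 2) / 2) - 1)) * 2) ^ 2 * ((ε ^ 2 + ‖x - ξ‖ ^ 2) - ε ^ 2) := by
    rw [← hS, Finset.mul_sum]
    refine Finset.sum_congr rfl fun l _ => ?_
    rw [hD1 l]; ring
  have hsum2 : ∑ l, pder n l (pder n l (fun y => bubble n ξ ε y ^ 2)) x
      = (((ε ^ (((n : ℝ) - 2) / 2)) ^ 2 * (-((n : ℝ) - 2)) * 2) * ((-((n : ℝ) - 2) - 1) * ((ε ^ 2 + ‖x - ξ‖ ^ 2) ^ (-(((n : ℝ) - 2) / 2) - 1) * (ε ^ 2 + ‖x - ξ‖ ^ 2) ^ (-(((n : ℝ) - 2) / 2) - 1)) * 2)) * ((ε ^ 2 + ‖x - ξ‖ ^ 2) - ε ^ 2)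
        + (n : ℝ) * (((ε ^ (((n : ℝ) - 2) / 2)) ^ 2 * (-((n : ℝ) - 2)) * 2) * ((ε ^ 2 + ‖x - ξ‖ ^ 2) ^ (-(((n : ℝ) - 2) / 2) - 1) * ((ε ^ 2 + ‖x - ξ‖ ^ 2) ^ (-(((n : ℝ) - 2) / 2) - 1) * (ε ^ 2 + ‖x - ξ‖ ^ 2)))) := by
    have hterm : ∀ l ∈ Finset.univ, pder n l (pder n l (fun y => bubble n ξ ε y ^ 2)) x
        = (((ε ^ (((n : ℝ) - 2) / 2)) ^ 2 * (-((n : ℝ) - 2)) * 2) * ((-((n : ℝ) - 2) - 1) * ((ε ^ 2 + ‖x - ξ‖ ^ 2) ^ (-(((n : ℝ) - 2) / 2) - 1) * (ε ^ 2 + ‖x - ξ‖ ^ 2) ^ (-(((n : ℝ) - 2) / 2) - 1)) * 2)) * (x l - ξ l) ^ 2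
          + ((ε ^ (((n : ℝ) - 2) / 2)) ^ 2 * (-((n : ℝ) - 2)) * 2) * ((ε ^ 2 + ‖x - ξ‖ ^ 2) ^ (-(((n : ℝ) - 2) / 2) - 1) * ((ε ^ 2 + ‖x - ξ‖ ^ 2) ^ (-(((n : ℝ) - 2) / 2) - 1) * (ε ^ 2 + ‖x - ξ‖ ^ 2))) := by
      intro l _
      rw [hD2 l l]
      rw [if_pos rfl]
      ring
    rw [Finset.sum_congr rfl hterm, Finset.sum_add_distrib, ← Finset.mul_sum, hS,
      Finset.sum_const, Finset.card_univ, Fintype.card_fin, nsmul_eq_mul]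
  rw [hD1 i, hD1 k, hD2 i k, hsum1, hsum2]
  rcases eq_or_ne i k with h | h
  · subst h
    rw [if_pos rfl]
    field_simp
    ring
  · simp only [if_neg h, mul_zero, add_zero]
    field_simp
    ring
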